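/- Let φ : 𝔻 → 𝔻 be holomorphic and ψ(z) = (z+b)/(1+bz) with b ∈ (0,1). Set I = ∫₀¹ (1 - D_h φ(r)) λ(r) dr and S = Σ_{n≥0} (1 - D_h φ(ψ^{∘n}(0))). Then 2b/(1+b)² ≤ I/S ≤ 2b/(1-b)² (interpreted as 2b/(1+b)² · S ≤ I ≤ 2b/(1-b)² · S). -/

import Mathlib

open Metric Set MeasureTheory

noncomputable def Dh (φ : ℂ → ℂ) (z : ℂ) : ℝ :=
  (1 - ‖z‖ ^ 2) * ‖deriv φ z‖ / (1 - ‖φ z‖ ^ 2)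

open Complex ComplexConjugate

noncomputable def mob (a z : ℂ) : ℂ := (a - z) / (1 - conj a * z)

lemma abs_lt_one_iff_normSq {z : ℂ} : ‖z‖ < 1 ↔ Complex.normSq z < 1 := by
  rw [← Complex.sq_norm]
  constructor
  · intro h; nlinarith [norm_nonneg z]
  · intro h; nlinarith [norm_nonneg z]

lemma mob_den_ne {a z : ℂ} (h : ‖a‖ * ‖z‖ < 1) : 1 - conj a * z ≠ 0 := by
  intro h0
  have h1 : (1:ℂ) = conj a * z := by linear_combination h0
  have h2 := congrArg (‖·‖) h1
  simp only [norm_mul, norm_one, Complex.norm_conj] at h2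
  rw [← h2] at h
  simp at h

lemma key_identity (a z : ℂ) :
    Complex.normSq (1 - conj a * z) - Complex.normSq (a - z)
      = (1 - Complex.normSq a) * (1 - Complex.normSq z) := by
  simp only [Complex.normSq_apply, Complex.sub_re, Complex.sub_im, Complex.mul_re,
    Complex.mul_im, Complex.conj_re, Complex.conj_im, Complex.one_re, Complex.one_im]
  ring

lemma mob_den_ne' {a z : ℂ} (ha : ‖a‖ < 1) (hz : ‖z‖ ≤ 1) :
    1 - conj a * z ≠ 0 := by
  apply mob_den_ne
  nlinarith [norm_nonneg a, norm_nonneg z]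

lemma one_sub_normSq_mob {a z : ℂ} (ha : ‖a‖ < 1) (hz : ‖z‖ < 1) :
    1 - Complex.normSq (mob a z)
      = (1 - Complex.normSq a) * (1 - Complex.normSq z) / Complex.normSq (1 - conj a * z) := by
  have hd : (1 : ℂ) - conj a * z ≠ 0 := mob_den_ne' ha hz.le
  have hd' : Complex.normSq (1 - conj a * z) ≠ 0 := by
    simpa [Complex.normSq_eq_zero] using hd
  rw [mob, Complex.normSq_div]
  rw [eq_div_iff hd', sub_mul, div_mul_cancel₀ _ hd']
  linear_combination key_identity a z

lemma mob_mem_ball {a z : ℂ} (ha : ‖a‖ < 1) (hz : ‖z‖ < 1) :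
    ‖mob a z‖ < 1 := by
  have h := one_sub_normSq_mob ha hz
  have h1 : 0 < 1 - Complex.normSq a := by
    have := abs_lt_one_iff_normSq.1 ha; linarith
  have h2 : 0 < 1 - Complex.normSq z := by
    have := abs_lt_one_iff_normSq.1 hz; linarith
  have hd : (1 : ℂ) - conj a * z ≠ 0 := mob_den_ne' ha hz.le
  have hd' : 0 < Complex.normSq (1 - conj a * z) := by
    simpa [Complex.normSq_pos] using hd
  apply abs_lt_one_iff_normSq.2
  have : 0 < 1 - Complex.normSq (mob a z) := by rw [h]; positivity
  linarith

lemma mob_mob {a z : ℂ} (ha : ‖a‖ < 1) (hz : ‖z‖ < 1) :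
    mob a (mob a z) = z := by
  have hd : (1 : ℂ) - conj a * z ≠ 0 := mob_den_ne' ha hz.le
  have hd2 : (1 : ℂ) - conj a * mob a z ≠ 0 := mob_den_ne' ha (mob_mem_ball ha hz).le
  have hca : (Complex.normSq a : ℂ) = conj a * a := by
    rw [mul_comm]; exact (Complex.mul_conj a).symm
  have h4 : (1:ℂ) - a * conj a ≠ 0 := by
    rw [Complex.mul_conj]
    intro h
    have : ((1 - Complex.normSq a : ℝ) : ℂ) = 0 := by push_cast; linear_combination h
    rw [Complex.ofReal_eq_zero] at this
    have := abs_lt_one_iff_normSq.1 ha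
    linarith
  simp only [mob] at hd2 ⊢
  field_simp [h4]
  have hnum : a * (1 - conj a * z) - (a - z) = z * (1 - a * conj a) := by ring
  have hden : 1 - conj a * z - conj a * (a - z) = 1 - a * conj a := by ring
  have hd' : (1:ℂ) - z * conj a ≠ 0 := by rw [mul_comm]; exact hd
  rw [sub_div' hd', one_sub_div hd', div_div_div_cancel_right₀ hd', div_eq_iff (by rw [show 1 - z * conj a - (a - z) * conj a = 1 - a * conj a by ring]; exact h4)]
  ring

lemma mob_zero (a : ℂ) : mob a 0 = a := by simp [mob]

lemma hasDerivAt_mob (a : ℂ) {z : ℂ} (h : (1:ℂ) - conj a * z ≠ 0) :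
    HasDerivAt (mob a) (((Complex.normSq a : ℂ) - 1) / (1 - conj a * z) ^ 2) z := by
  have h1 : HasDerivAt (fun z : ℂ => a - z) (-1) z := by
    simpa using ((hasDerivAt_id z).const_sub a)
  have h2 : HasDerivAt (fun z : ℂ => 1 - conj a * z) (-(conj a)) z := by
    simpa using (((hasDerivAt_id z).const_mul (conj a)).const_sub 1)
  have h3 := h1.div h2 h
  refine h3.congr_deriv ?_
  have hca : (Complex.normSq a : ℂ) = conj a * a := by
    rw [mul_comm]; exact (Complex.mul_conj a).symm
  rw [hca]
  field_simp
  ring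

lemma mem_ball_abs {z : ℂ} : z ∈ ball (0:ℂ) 1 ↔ ‖z‖ < 1 := by
  simp [mem_ball_zero_iff]

lemma abs_mob_symm (a z : ℂ) : ‖mob a z‖ = ‖mob z a‖ := by
  simp only [mob, norm_div]
  rw [norm_sub_rev a z]
  congr 1
  calc ‖1 - conj a * z‖ = ‖conj (1 - conj a * z)‖ := (Complex.norm_conj _).symm
    _ = ‖1 - conj z * a‖ := by rw [map_sub, map_one, map_mul, Complex.conj_conj]; ring_nf

lemma mob_diffOn {a : ℂ} (ha : ‖a‖ < 1) :
    DifferentiableOn ℂ (mob a) (ball (0:ℂ) 1) := fun z hz =>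
  (hasDerivAt_mob a (mob_den_ne' ha (mem_ball_abs.1 hz).le)).differentiableAt.differentiableWithinAt

lemma mob_mapsTo {a : ℂ} (ha : ‖a‖ < 1) :
    MapsTo (mob a) (ball (0:ℂ) 1) (ball (0:ℂ) 1) := fun z hz =>
  mem_ball_abs.2 (mob_mem_ball ha (mem_ball_abs.1 hz))


noncomputable def Fc (f : ℂ → ℂ) (w : ℂ) : ℂ → ℂ := mob (f w) ∘ f ∘ mob w

variable {f : ℂ → ℂ}

lemma Fc_diffOn (hd : DifferentiableOn ℂ f (ball (0:ℂ) 1))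
    (hm : MapsTo f (ball (0:ℂ) 1) (ball (0:ℂ) 1)) {w : ℂ} (hw : w ∈ ball (0:ℂ) 1) :
    DifferentiableOn ℂ (Fc f w) (ball (0:ℂ) 1) :=
  ((mob_diffOn (mem_ball_abs.1 (hm hw))).comp hd hm).comp (mob_diffOn (mem_ball_abs.1 hw))
    (mob_mapsTo (mem_ball_abs.1 hw))

lemma Fc_mapsTo (hm : MapsTo f (ball (0:ℂ) 1) (ball (0:ℂ) 1)) {w : ℂ} (hw : w ∈ ball (0:ℂ) 1) :
    MapsTo (Fc f w) (ball (0:ℂ) 1) (ball (0:ℂ) 1) :=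
  ((mob_mapsTo (mem_ball_abs.1 (hm hw))).comp hm).comp (mob_mapsTo (mem_ball_abs.1 hw))

lemma Fc_zero (w : ℂ) : Fc f w 0 = 0 := by
  simp [Fc, mob_zero, mob]

lemma Fc_deriv_abs (hd : DifferentiableOn ℂ f (ball (0:ℂ) 1))
    (hm : MapsTo f (ball (0:ℂ) 1) (ball (0:ℂ) 1)) {w : ℂ} (hw : w ∈ ball (0:ℂ) 1) :
    ‖deriv (Fc f w) 0‖ = Dh f w := by
  have hw' := mem_ball_abs.1 hw
  have hfw' := mem_ball_abs.1 (hm hw)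
  have h1 : HasDerivAt (mob w) ((Complex.normSq w : ℂ) - 1) 0 := by
    have := hasDerivAt_mob w (z := 0) (by simp)
    simpa using this
  have h2 : HasDerivAt f (deriv f w) (mob w 0) := by
    rw [mob_zero]
    exact (hd.differentiableAt (isOpen_ball.mem_nhds hw)).hasDerivAt
  have h21 : HasDerivAt (f ∘ mob w) (deriv f w * ((Complex.normSq w : ℂ) - 1)) 0 :=
    HasDerivAt.comp 0 h2 h1
  have h3 : HasDerivAt (mob (f w)) (((Complex.normSq (f w) : ℂ) - 1) / (1 - conj (f w) * f w) ^ 2)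
      ((f ∘ mob w) 0) := by
    have : (f ∘ mob w) 0 = f w := by simp [mob_zero]
    rw [this]
    exact hasDerivAt_mob (f w) (mob_den_ne' hfw' hfw'.le)
  have hF : HasDerivAt (Fc f w)
      (((Complex.normSq (f w) : ℂ) - 1) / (1 - conj (f w) * f w) ^ 2
        * (deriv f w * ((Complex.normSq w : ℂ) - 1))) 0 :=
    HasDerivAt.comp 0 h3 h21
  rw [hF.deriv]
  have hfc : (1:ℂ) - conj (f w) * f w = ((1 - Complex.normSq (f w) : ℝ) : ℂ) := by
    push_cast
    rw [mul_comm, Complex.mul_conj]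
  have hns : Complex.normSq (f w) < 1 := abs_lt_one_iff_normSq.1 hfw'
  have hnsw : Complex.normSq w < 1 := abs_lt_one_iff_normSq.1 hw'
  rw [norm_mul, norm_div, norm_mul, norm_pow, hfc]
  rw [show ((Complex.normSq (f w) : ℂ) - 1) = ((Complex.normSq (f w) - 1 : ℝ) : ℂ) by push_cast; ring]
  rw [show ((Complex.normSq w : ℂ) - 1) = ((Complex.normSq w - 1 : ℝ) : ℂ) by push_cast; ring]
  simp only [Complex.norm_real, Real.norm_eq_abs]
  rw [Dh, Complex.sq_norm, Complex.sq_norm]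
  rw [abs_of_neg (by linarith : Complex.normSq (f w) - 1 < 0),
    abs_of_pos (by linarith : (0:ℝ) < 1 - Complex.normSq (f w)),
    abs_of_neg (by linarith : Complex.normSq w - 1 < 0)]
  have h1f : (1:ℝ) - Complex.normSq (f w) ≠ 0 := by linarith
  field_simp [h1f]
  ring

lemma pick_dist (hd : DifferentiableOn ℂ f (ball (0:ℂ) 1))
    (hm : MapsTo f (ball (0:ℂ) 1) (ball (0:ℂ) 1)) {ζ : ℂ} (hζ : ζ ∈ ball (0:ℂ) 1) :
    ‖mob (f 0) (f ζ)‖ ≤ ‖ζ‖ := by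
  have h0 : (0:ℂ) ∈ ball (0:ℂ) 1 := by simp
  set H : ℂ → ℂ := mob (f 0) ∘ f with hH
  have hHd : DifferentiableOn ℂ H (ball (0:ℂ) 1) :=
    (mob_diffOn (mem_ball_abs.1 (hm h0))).comp hd hm
  have hHm : MapsTo H (ball (0:ℂ) 1) (ball (0:ℂ) 1) :=
    (mob_mapsTo (mem_ball_abs.1 (hm h0))).comp hm
  have hH0 : H 0 = 0 := by simp [hH, mob]
  have hmaps : MapsTo H (ball (0:ℂ) 1) (ball (H 0) 1) := by rwa [hH0]
  have key := Complex.norm_dslope_le_div_of_mapsTo_ball hHd (hmaps.mono_right ball_subset_closedBall) hζ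
  rcases eq_or_ne ζ 0 with rfl | hζ0
  · simp [mob]
  · rw [dslope_of_ne _ hζ0, slope_def_field, hH0, sub_zero, sub_zero] at key
    rw [norm_div, div_one, div_le_one (norm_pos_iff.2 hζ0)] at key
    exact key

lemma Dh_le_one (hd : DifferentiableOn ℂ f (ball (0:ℂ) 1))
    (hm : MapsTo f (ball (0:ℂ) 1) (ball (0:ℂ) 1)) {w : ℂ} (hw : w ∈ ball (0:ℂ) 1) :
    Dh f w ≤ 1 := by
  have h0 : (0:ℂ) ∈ ball (0:ℂ) 1 := by simp
  have hmaps : MapsTo (Fc f w) (ball (0:ℂ) 1) (ball (Fc f w 0) 1) := by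
    rw [Fc_zero]; exact Fc_mapsTo hm hw
  have key := Complex.norm_dslope_le_div_of_mapsTo_ball (Fc_diffOn hd hm hw) (hmaps.mono_right ball_subset_closedBall) h0
  rw [dslope_same] at key
  rw [← Fc_deriv_abs hd hm hw]
  simpa using key

lemma Dh_nonneg (hm : MapsTo f (ball (0:ℂ) 1) (ball (0:ℂ) 1)) {w : ℂ}
    (hw : w ∈ ball (0:ℂ) 1) : 0 ≤ Dh f w := by
  have hfw' := mem_ball_abs.1 (hm hw)
  have hw' := mem_ball_abs.1 hw
  have h1 : (0:ℝ) < 1 - ‖f w‖ ^ 2 := by nlinarith [norm_nonneg (f w)]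
  have h2 : (0:ℝ) ≤ 1 - ‖w‖ ^ 2 := by nlinarith [norm_nonneg w]
  rw [Dh]
  positivity

/-- purely algebraic step -/
lemma lemma_M {x y t d s : ℝ} (hx : 0 ≤ x) (hx1 : x ≤ 1) (hy : 0 ≤ y) (hy1 : y ≤ 1)
    (ht : 0 ≤ t) (ht1 : t ≤ 1) (hds : d ≤ t * s) (hd : |x - y| ≤ d)
    (hs : 1 - x * y ≤ s) (hid : s ^ 2 = (1 - x ^ 2) * (1 - y ^ 2) + d ^ 2) :
    |x - y| ≤ t * (1 - x * y) := by
  have hd0 : 0 ≤ d := le_trans (abs_nonneg _) hd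
  have h1 : (1 - x ^ 2) * (1 - y ^ 2) ≥ s ^ 2 * (1 - t ^ 2) := by nlinarith
  have hxy : (0:ℝ) ≤ 1 - x * y := by nlinarith
  have h2 : (1 - x ^ 2) * (1 - y ^ 2) ≥ (1 - x * y) ^ 2 * (1 - t ^ 2) := by
    nlinarith [mul_nonneg (by nlinarith : (0:ℝ) ≤ s ^ 2 - (1 - x * y) ^ 2)
      (by nlinarith : (0:ℝ) ≤ 1 - t ^ 2)]
  have h3 : (x - y) ^ 2 ≤ t ^ 2 * (1 - x * y) ^ 2 := by nlinarith
  have h4 : 0 ≤ t * (1 - x * y) := mul_nonneg ht hxy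
  rw [abs_le]
  constructor <;>
    nlinarith [h3, h4, sq_nonneg (x - y + t * (1 - x * y)), sq_nonneg (x - y - t * (1 - x * y))]

lemma step (hd : DifferentiableOn ℂ f (ball (0:ℂ) 1))
    (hm : MapsTo f (ball (0:ℂ) 1) (ball (0:ℂ) 1)) {z w : ℂ}
    (hz : z ∈ ball (0:ℂ) 1) (hw : w ∈ ball (0:ℂ) 1) (hzw : z ≠ w) :
    ‖mob (f w) (f z)‖ / ‖mob w z‖ ≤ 1 ∧
    |‖mob (f w) (f z)‖ / ‖mob w z‖ - Dh f w|
      ≤ ‖mob w z‖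
        * (1 - ‖mob (f w) (f z)‖ / ‖mob w z‖ * Dh f w) := by
  have hw' := mem_ball_abs.1 hw
  have hz' := mem_ball_abs.1 hz
  have h0 : (0:ℂ) ∈ ball (0:ℂ) 1 := by simp
  set ζ := mob w z with hζdef
  have hζ : ζ ∈ ball (0:ℂ) 1 := mem_ball_abs.2 (mob_mem_ball hw' hz')
  have hζ0 : ζ ≠ 0 := by
    intro h
    rw [hζdef, mob, div_eq_zero_iff] at h
    rcases h with h | h
    · exact hzw (by linear_combination -h)
    · exact mob_den_ne' hw' hz'.le h
  set g := dslope (Fc f w) 0 with hgdef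
  have hgd : DifferentiableOn ℂ g (ball (0:ℂ) 1) :=
    (differentiableOn_dslope (isOpen_ball.mem_nhds h0)).2 (Fc_diffOn hd hm hw)
  have hgle : ∀ u ∈ ball (0:ℂ) 1, ‖g u‖ ≤ 1 := by
    intro u hu
    have hmaps : MapsTo (Fc f w) (ball (0:ℂ) 1) (ball (Fc f w 0) 1) := by
      rw [Fc_zero]; exact Fc_mapsTo hm hw
    have := Complex.norm_dslope_le_div_of_mapsTo_ball (Fc_diffOn hd hm hw) (hmaps.mono_right ball_subset_closedBall) hu
    simpa using this
  have hg0 : ‖g 0‖ = Dh f w := by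
    rw [hgdef, dslope_same]; exact Fc_deriv_abs hd hm hw
  have hFζ : Fc f w ζ = mob (f w) (f z) := by
    simp only [Fc, Function.comp_apply, hζdef]
    rw [mob_mob hw' hz']
  have hgζ : g ζ = mob (f w) (f z) / ζ := by
    rw [hgdef, dslope_of_ne _ hζ0, slope_def_field, Fc_zero, sub_zero, sub_zero, hFζ]
  have hx : ‖g ζ‖ = ‖mob (f w) (f z)‖ / ‖ζ‖ := by
    rw [hgζ, norm_div]
  -- the key distance bound
  have hkey : ‖g ζ - g 0‖
      ≤ ‖ζ‖ * ‖1 - conj (g 0) * g ζ‖ := by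
    by_cases hcase : ∀ u ∈ ball (0:ℂ) 1, ‖g u‖ < 1
    · have hpick := pick_dist (f := g) hgd (fun u hu => mem_ball_abs.2 (hcase u hu)) hζ
      rw [mob, norm_div] at hpick
      have hsne : (1:ℂ) - conj (g 0) * g ζ ≠ 0 :=
        mob_den_ne' (hcase 0 h0) (hcase ζ hζ).le
      have hspos : 0 < ‖1 - conj (g 0) * g ζ‖ := norm_pos_iff.2 hsne
      rw [div_le_iff₀ hspos] at hpick
      calc ‖g ζ - g 0‖ = ‖g 0 - g ζ‖ := by
            rw [norm_sub_rev]
        _ ≤ ‖ζ‖ * ‖1 - conj (g 0) * g ζ‖ := hpick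
    · push_neg at hcase
      obtain ⟨ζ₀, hζ₀, hζ₀1⟩ := hcase
      have hmax : IsMaxOn (norm ∘ g) (ball (0:ℂ) 1) ζ₀ := by
        intro u hu
        simp only [Function.comp_apply]
        exact le_trans (hgle u hu) (by simpa using hζ₀1)
      have hconst := Complex.eqOn_of_isPreconnected_of_isMaxOn_norm
        (convex_ball (0:ℂ) 1).isPreconnected isOpen_ball hgd hζ₀ hmax
      have h1 : g ζ = g ζ₀ := hconst hζ
      have h2 : g 0 = g ζ₀ := hconst h0
      rw [h1, h2, sub_self]
      simp only [norm_zero]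
      positivity
  -- apply the algebraic lemma
  have hX1 : ‖g ζ‖ ≤ 1 := hgle ζ hζ
  have hid : ‖1 - conj (g 0) * g ζ‖ ^ 2
      = (1 - ‖g ζ‖ ^ 2) * (1 - ‖g 0‖ ^ 2)
        + ‖g ζ - g 0‖ ^ 2 := by
    have := key_identity (g 0) (g ζ)
    rw [Complex.sq_norm, Complex.sq_norm, Complex.sq_norm, Complex.sq_norm]
    rw [show g ζ - g 0 = -(g 0 - g ζ) by ring, Complex.normSq_neg]
    linear_combination this
  have habsdiff : |‖g ζ‖ - ‖g 0‖| ≤ ‖g ζ - g 0‖ := by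
    simpa using abs_norm_sub_norm_le (g ζ) (g 0)
  have hstri : 1 - ‖g ζ‖ * ‖g 0‖
      ≤ ‖1 - conj (g 0) * g ζ‖ := by
    have h := norm_sub_norm_le (1 : ℂ) (conj (g 0) * g ζ)
    simp only [norm_one, norm_mul, Complex.norm_conj] at h
    calc 1 - ‖g ζ‖ * ‖g 0‖
        = 1 - ‖g 0‖ * ‖g ζ‖ := by ring
      _ ≤ ‖1 - conj (g 0) * g ζ‖ := h
  have hM := lemma_M (x := ‖g ζ‖) (y := Dh f w) (t := ‖ζ‖)
    (d := ‖g ζ - g 0‖) (s := ‖1 - conj (g 0) * g ζ‖)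
    (norm_nonneg _) hX1 (Dh_nonneg hm hw) (Dh_le_one hd hm hw)
    (norm_nonneg _) (mob_mem_ball hw' hz').le hkey
    (by rwa [hg0] at habsdiff) (by rwa [hg0] at hstri) (by rw [hid, hg0])
  rw [hx] at hM hX1
  exact ⟨hX1, hM⟩

lemma lemmaK (hd : DifferentiableOn ℂ f (ball (0:ℂ) 1))
    (hm : MapsTo f (ball (0:ℂ) 1) (ball (0:ℂ) 1)) {z w : ℂ}
    (hz : z ∈ ball (0:ℂ) 1) (hw : w ∈ ball (0:ℂ) 1) :
    (1 - ‖mob w z‖) ^ 2 * (1 - Dh f w)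
      ≤ (1 + ‖mob w z‖) ^ 2 * (1 - Dh f z) := by
  rcases eq_or_ne z w with rfl | hzw
  · simp [mob]
  · obtain ⟨hX1, S1⟩ := step hd hm hz hw hzw
    obtain ⟨hX1', S2⟩ := step hd hm hw hz hzw.symm
    rw [abs_mob_symm z w, abs_mob_symm (f z) (f w)] at hX1' S2
    set p := ‖mob w z‖ with hp
    set X := ‖mob (f w) (f z)‖ / p with hX
    set Dw := Dh f w
    set Dz := Dh f z
    have hp0 : 0 ≤ p := norm_nonneg _
    have hp1 : p < 1 := mob_mem_ball (mem_ball_abs.1 hw) (mem_ball_abs.1 hz)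
    have hX0 : 0 ≤ X := by positivity
    have hDw0 : 0 ≤ Dw := Dh_nonneg hm hw
    have hDw1 : Dw ≤ 1 := Dh_le_one hd hm hw
    have hDz0 : 0 ≤ Dz := Dh_nonneg hm hz
    have hDz1 : Dz ≤ 1 := Dh_le_one hd hm hz
    have hA : X * (1 + p * Dw) ≤ Dw + p := by
      have := (abs_le.1 S1).2
      nlinarith
    have hB : Dz * (1 + p * X) ≤ X + p := by
      have := (abs_le.1 S2).1
      nlinarith
    have h1 : (1 - p) * (1 - Dw) ≤ (1 - X) * (1 + p) := by
      nlinarith [mul_nonneg (by linarith : (0:ℝ) ≤ 1 - X)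
        (by nlinarith : (0:ℝ) ≤ p - p * Dw)]
    have h2 : (1 - p) * (1 - X) ≤ (1 - Dz) * (1 + p) := by
      nlinarith [mul_nonneg (by linarith : (0:ℝ) ≤ 1 - Dz)
        (by nlinarith : (0:ℝ) ≤ p - p * X)]
    nlinarith [mul_le_mul_of_nonneg_left h1 (by linarith : (0:ℝ) ≤ 1 - p),
      mul_le_mul_of_nonneg_left h2 (by linarith : (0:ℝ) ≤ 1 + p)]

lemma abs_mob_real {a r : ℝ} (ha0 : 0 ≤ a) (har : a ≤ r) (hr1 : r < 1) :
    ‖mob (a:ℂ) (r:ℂ)‖ = (r - a) / (1 - a * r) := by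
  have har1 : a * r < 1 := by nlinarith
  have : mob (a:ℂ) (r:ℂ) = (((a - r) / (1 - a * r) : ℝ) : ℂ) := by
    rw [mob, Complex.conj_ofReal]
    push_cast
    ring
  rw [this, Complex.norm_real, Real.norm_eq_abs, abs_div, abs_of_nonpos (by linarith), abs_of_pos (by linarith)]
  ring_nf

lemma real_mem_ball {r : ℝ} (h0 : 0 ≤ r) (h1 : r < 1) : ((r:ℂ)) ∈ ball (0:ℂ) 1 := by
  rw [mem_ball_abs, Complex.norm_real, Real.norm_eq_abs, _root_.abs_of_nonneg h0]
  exact h1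

lemma lemmaK_real (hd : DifferentiableOn ℂ f (ball (0:ℂ) 1))
    (hm : MapsTo f (ball (0:ℂ) 1) (ball (0:ℂ) 1)) {a r : ℝ}
    (ha0 : 0 ≤ a) (har : a ≤ r) (hr1 : r < 1) :
    (1 + a) ^ 2 * (1 - r) ^ 2 * (1 - Dh f (a:ℂ)) ≤ (1 - a) ^ 2 * (1 + r) ^ 2 * (1 - Dh f (r:ℂ))
    ∧ (1 + a) ^ 2 * (1 - r) ^ 2 * (1 - Dh f (r:ℂ))
        ≤ (1 - a) ^ 2 * (1 + r) ^ 2 * (1 - Dh f (a:ℂ)) := by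
  have ha1 : a < 1 := lt_of_le_of_lt har hr1
  have hr0 : 0 ≤ r := le_trans ha0 har
  have hza := real_mem_ball ha0 ha1
  have hzr := real_mem_ball hr0 hr1
  have har1 : a * r < 1 := by nlinarith
  have hden : (1:ℝ) - a * r ≠ 0 := by linarith
  set q := (r - a) / (1 - a * r) with hq
  have e1 : (1 - q) * (1 - a * r) = (1 + a) * (1 - r) := by
    rw [hq, sub_mul, div_mul_cancel₀ _ hden]; ring
  have e2 : (1 + q) * (1 - a * r) = (1 - a) * (1 + r) := by
    rw [hq, add_mul, div_mul_cancel₀ _ hden]; ring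
  constructor
  · have h := lemmaK hd hm hzr hza
    rw [abs_mob_real ha0 har hr1, ← hq] at h
    have h2 := mul_le_mul_of_nonneg_right h (sq_nonneg (1 - a * r))
    calc (1 + a) ^ 2 * (1 - r) ^ 2 * (1 - Dh f (a:ℂ))
        = (1 - q) ^ 2 * (1 - Dh f (a:ℂ)) * (1 - a * r) ^ 2 := by
          linear_combination (1 - Dh f (a:ℂ))
            * ((1 + a) * (1 - r) + (1 - q) * (1 - a * r)) * e1.symm
      _ ≤ (1 + q) ^ 2 * (1 - Dh f (r:ℂ)) * (1 - a * r) ^ 2 := h2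
      _ = (1 - a) ^ 2 * (1 + r) ^ 2 * (1 - Dh f (r:ℂ)) := by
          linear_combination (1 - Dh f (r:ℂ))
            * ((1 - a) * (1 + r) + (1 + q) * (1 - a * r)) * e2
  · have h := lemmaK hd hm hza hzr
    rw [abs_mob_symm, abs_mob_real ha0 har hr1, ← hq] at h
    have h2 := mul_le_mul_of_nonneg_right h (sq_nonneg (1 - a * r))
    calc (1 + a) ^ 2 * (1 - r) ^ 2 * (1 - Dh f (r:ℂ))
        = (1 - q) ^ 2 * (1 - Dh f (r:ℂ)) * (1 - a * r) ^ 2 := by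
          linear_combination (1 - Dh f (r:ℂ))
            * ((1 + a) * (1 - r) + (1 - q) * (1 - a * r)) * e1.symm
      _ ≤ (1 + q) ^ 2 * (1 - Dh f (a:ℂ)) * (1 - a * r) ^ 2 := h2
      _ = (1 - a) ^ 2 * (1 + r) ^ 2 * (1 - Dh f (a:ℂ)) := by
          linear_combination (1 - Dh f (a:ℂ))
            * ((1 - a) * (1 + r) + (1 + q) * (1 - a * r)) * e2

lemma pointwise_low (hd : DifferentiableOn ℂ f (ball (0:ℂ) 1))
    (hm : MapsTo f (ball (0:ℂ) 1) (ball (0:ℂ) 1)) {a r : ℝ}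
    (ha0 : 0 ≤ a) (har : a ≤ r) (hr1 : r < 1) :
    2 * (1 + a) ^ 2 * (1 - r) / ((1 - a) ^ 2 * (1 + r) ^ 3) * (1 - Dh f (a:ℂ))
      ≤ (1 - Dh f (r:ℂ)) * (2 / (1 - r ^ 2)) := by
  have hr0 : 0 ≤ r := le_trans ha0 har
  have ha1 : a < 1 := lt_of_le_of_lt har hr1
  have h := (lemmaK_real hd hm ha0 har hr1).1
  have d1 : (0:ℝ) < (1 - a) ^ 2 * (1 + r) ^ 3 :=
    mul_pos (pow_pos (by linarith) 2) (pow_pos (by linarith) 3)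
  have d2 : (0:ℝ) < 1 - r ^ 2 := by nlinarith
  rw [div_mul_eq_mul_div, mul_comm (1 - Dh f (r:ℂ)) (2 / (1 - r ^ 2)), div_mul_eq_mul_div,
    div_le_div_iff₀ d1 d2]
  nlinarith [mul_le_mul_of_nonneg_left h (by positivity : (0:ℝ) ≤ 2 * (1 + r))]

lemma pointwise_high (hd : DifferentiableOn ℂ f (ball (0:ℂ) 1))
    (hm : MapsTo f (ball (0:ℂ) 1) (ball (0:ℂ) 1)) {a r : ℝ}
    (ha0 : 0 ≤ a) (har : a ≤ r) (hr1 : r < 1) :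
    (1 - Dh f (r:ℂ)) * (2 / (1 - r ^ 2))
      ≤ 2 * (1 - a) ^ 2 * (1 + r) / ((1 + a) ^ 2 * (1 - r) ^ 3) * (1 - Dh f (a:ℂ)) := by
  have hr0 : 0 ≤ r := le_trans ha0 har
  have ha1 : a < 1 := lt_of_le_of_lt har hr1
  have h := (lemmaK_real hd hm ha0 har hr1).2
  have d1 : (0:ℝ) < (1 + a) ^ 2 * (1 - r) ^ 3 :=
    mul_pos (pow_pos (by linarith) 2) (pow_pos (by linarith) 3)
  have d2 : (0:ℝ) < 1 - r ^ 2 := by nlinarith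
  rw [show (1 - Dh f (r:ℂ)) * (2 / (1 - r ^ 2)) = 2 * (1 - Dh f (r:ℂ)) / (1 - r ^ 2) by ring,
    show 2 * (1 - a) ^ 2 * (1 + r) / ((1 + a) ^ 2 * (1 - r) ^ 3) * (1 - Dh f (a:ℂ))
      = 2 * (1 - a) ^ 2 * (1 + r) * (1 - Dh f (a:ℂ)) / ((1 + a) ^ 2 * (1 - r) ^ 3) by ring,
    div_le_div_iff₀ d2 d1]
  nlinarith [mul_le_mul_of_nonneg_left h (by positivity : (0:ℝ) ≤ 2 * (1 + r))]

section FTC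

variable {a a' bb : ℝ}

lemma orbit_step_facts (ha0 : 0 ≤ a) (ha1 : a < 1) (hb0 : 0 < bb) (hb1 : bb < 1)
    (ha' : a' = (a + bb) / (1 + a * bb)) :
    a < a' ∧ a' < 1 ∧ 0 < 1 + a * bb := by
  have hpos : 0 < 1 + a * bb := by nlinarith
  refine ⟨?_, ?_, hpos⟩
  · rw [ha', lt_div_iff₀ hpos]
    nlinarith [mul_pos hb0 (by nlinarith : (0:ℝ) < 1 - a ^ 2)]
  · rw [ha', div_lt_one hpos]
    nlinarith [mul_pos (by linarith : (0:ℝ) < 1 - a) (by linarith : (0:ℝ) < 1 - bb)]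

lemma integral_clow (ha0 : 0 ≤ a) (ha1 : a < 1) (hb0 : 0 < bb) (hb1 : bb < 1)
    (ha' : a' = (a + bb) / (1 + a * bb)) :
    ∫ r in a..a', 2 * (1 + a) ^ 2 * (1 - r) / ((1 - a) ^ 2 * (1 + r) ^ 3)
      = 2 * bb / (1 + bb) ^ 2 := by
  obtain ⟨haa', ha'1, hpos⟩ := orbit_step_facts ha0 ha1 hb0 hb1 ha'
  have huIcc : uIcc a a' = Icc a a' := uIcc_of_le haa'.le
  have hmem : ∀ x ∈ uIcc a a', 0 ≤ x ∧ x < 1 := by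
    intro x hx
    rw [huIcc, mem_Icc] at hx
    exact ⟨le_trans ha0 hx.1, lt_of_le_of_lt hx.2 ha'1⟩
  have hderiv : ∀ x ∈ uIcc a a',
      HasDerivAt (fun r : ℝ => (1 + a) ^ 2 / (1 - a) ^ 2 * (2 * r / (1 + r) ^ 2))
        (2 * (1 + a) ^ 2 * (1 - x) / ((1 - a) ^ 2 * (1 + x) ^ 3)) x := by
    intro x hx
    obtain ⟨hx0, hx1⟩ := hmem x hx
    have hne : ((1:ℝ) + x) ^ 2 ≠ 0 := by positivity
    have h1 : HasDerivAt (fun r : ℝ => 2 * r) 2 x := by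
      simpa using (hasDerivAt_id x).const_mul (2:ℝ)
    have h2 : HasDerivAt (fun r : ℝ => (1 + r) ^ 2) (2 * (1 + x)) x := by
      have := ((hasDerivAt_id x).const_add (1:ℝ)).fun_pow 2
      simpa using this
    have h3 := (h1.div h2 hne).const_mul ((1 + a) ^ 2 / (1 - a) ^ 2)
    refine h3.congr_deriv ?_
    have hxne : (1:ℝ) + x ≠ 0 := by linarith
    have hane : (1:ℝ) - a ≠ 0 := by linarith
    field_simp
    ring
  have hcont : ContinuousOn
      (fun x : ℝ => 2 * (1 + a) ^ 2 * (1 - x) / ((1 - a) ^ 2 * (1 + x) ^ 3)) (uIcc a a') := by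
    apply ContinuousOn.div
    · fun_prop
    · fun_prop
    · intro x hx
      obtain ⟨hx0, hx1⟩ := hmem x hx
      have : (0:ℝ) < (1 - a) ^ 2 * (1 + x) ^ 3 :=
        mul_pos (pow_pos (by linarith) 2) (pow_pos (by linarith) 3)
      exact ne_of_gt this
  rw [intervalIntegral.integral_eq_sub_of_hasDerivAt hderiv (hcont.intervalIntegrable)]
  have hane : (1:ℝ) - a ≠ 0 := by linarith
  have h1a : (0:ℝ) < 1 + a := by linarith
  have hbne : (1:ℝ) + bb ≠ 0 := by linarith
  have hpn : (1:ℝ) + a * bb ≠ 0 := ne_of_gt hpos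
  have h1a' : (1:ℝ) + a' ≠ 0 := by nlinarith
  rw [ha']
  rw [ha'] at h1a'
  field_simp
  ring

lemma integral_chigh (ha0 : 0 ≤ a) (ha1 : a < 1) (hb0 : 0 < bb) (hb1 : bb < 1)
    (ha' : a' = (a + bb) / (1 + a * bb)) :
    ∫ r in a..a', 2 * (1 - a) ^ 2 * (1 + r) / ((1 + a) ^ 2 * (1 - r) ^ 3)
      = 2 * bb / (1 - bb) ^ 2 := by
  obtain ⟨haa', ha'1, hpos⟩ := orbit_step_facts ha0 ha1 hb0 hb1 ha'
  have huIcc : uIcc a a' = Icc a a' := uIcc_of_le haa'.le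
  have hmem : ∀ x ∈ uIcc a a', 0 ≤ x ∧ x < 1 := by
    intro x hx
    rw [huIcc, mem_Icc] at hx
    exact ⟨le_trans ha0 hx.1, lt_of_le_of_lt hx.2 ha'1⟩
  have hderiv : ∀ x ∈ uIcc a a',
      HasDerivAt (fun r : ℝ => (1 - a) ^ 2 / (1 + a) ^ 2 * (2 * r / (1 - r) ^ 2))
        (2 * (1 - a) ^ 2 * (1 + x) / ((1 + a) ^ 2 * (1 - x) ^ 3)) x := by
    intro x hx
    obtain ⟨hx0, hx1⟩ := hmem x hx
    have hne : ((1:ℝ) - x) ^ 2 ≠ 0 := by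
      have : (0:ℝ) < 1 - x := by linarith
      positivity
    have h1 : HasDerivAt (fun r : ℝ => 2 * r) 2 x := by
      simpa using (hasDerivAt_id x).const_mul (2:ℝ)
    have h2 : HasDerivAt (fun r : ℝ => (1 - r) ^ 2) (2 * (1 - x) * (-1)) x := by
      have := ((hasDerivAt_id x).const_sub (1:ℝ)).fun_pow 2
      simpa using this
    have h3 := (h1.div h2 hne).const_mul ((1 - a) ^ 2 / (1 + a) ^ 2)
    refine h3.congr_deriv ?_
    have hxne : (1:ℝ) - x ≠ 0 := by linarith
    have hane : (1:ℝ) + a ≠ 0 := by linarith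
    field_simp
    ring
  have hcont : ContinuousOn
      (fun x : ℝ => 2 * (1 - a) ^ 2 * (1 + x) / ((1 + a) ^ 2 * (1 - x) ^ 3)) (uIcc a a') := by
    apply ContinuousOn.div
    · fun_prop
    · fun_prop
    · intro x hx
      obtain ⟨hx0, hx1⟩ := hmem x hx
      have : (0:ℝ) < (1 + a) ^ 2 * (1 - x) ^ 3 :=
        mul_pos (pow_pos (by linarith) 2) (pow_pos (by linarith) 3)
      exact ne_of_gt this
  rw [intervalIntegral.integral_eq_sub_of_hasDerivAt hderiv (hcont.intervalIntegrable)]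
  have hane : (1:ℝ) + a ≠ 0 := by linarith
  have hbne : (1:ℝ) - bb ≠ 0 := by linarith
  have hpn : (1:ℝ) + a * bb ≠ 0 := ne_of_gt hpos
  have h1am : (1:ℝ) - a ≠ 0 := by linarith
  have e1 : 1 - a' = (1 - a) * (1 - bb) / (1 + a * bb) := by
    rw [ha']; field_simp; ring
  have e2 : 2 * a' / (1 - a') ^ 2 = 2 * (a + bb) * (1 + a * bb) / ((1 - a) ^ 2 * (1 - bb) ^ 2) := by
    rw [e1, ha']
    field_simp
  rw [e2]
  field_simp
  ring
end FTC

section Orbit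

noncomputable def orb (b : ℝ) : ℕ → ℝ
  | 0 => 0
  | n + 1 => (orb b n + b) / (1 + orb b n * b)

variable {b : ℝ}

lemma orb_succ (n : ℕ) : orb b (n + 1) = (orb b n + b) / (1 + orb b n * b) := rfl

lemma orb_mem (hb0 : 0 < b) (hb1 : b < 1) : ∀ n, 0 ≤ orb b n ∧ orb b n < 1 := by
  intro n
  induction n with
  | zero => exact ⟨le_refl 0, one_pos⟩
  | succ n ih =>
    obtain ⟨h0, h1⟩ := ih
    obtain ⟨hlt, hlt1, _⟩ := orbit_step_facts h0 h1 hb0 hb1 (orb_succ n)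
    exact ⟨le_trans h0 hlt.le, hlt1⟩

lemma orb_lt_succ (hb0 : 0 < b) (hb1 : b < 1) (n : ℕ) : orb b n < orb b (n + 1) :=
  (orbit_step_facts (orb_mem hb0 hb1 n).1 (orb_mem hb0 hb1 n).2 hb0 hb1 (orb_succ n)).1

lemma orb_mono (hb0 : 0 < b) (hb1 : b < 1) : Monotone (orb b) :=
  monotone_nat_of_le_succ fun n => (orb_lt_succ hb0 hb1 n).le

lemma one_sub_orb_le (hb0 : 0 < b) (hb1 : b < 1) : ∀ n, 1 - orb b n ≤ (1 - b) ^ n := by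
  intro n
  induction n with
  | zero => simp [orb]
  | succ n ih =>
    have ⟨h0, h1⟩ := orb_mem hb0 hb1 n
    have hpos : 0 < 1 + orb b n * b := by nlinarith
    have e1 : 1 - orb b (n + 1) = (1 - orb b n) * (1 - b) / (1 + orb b n * b) := by
      rw [orb_succ]
      field_simp
      ring
    rw [e1, pow_succ]
    have h2 : (1 - orb b n) * (1 - b) / (1 + orb b n * b) ≤ (1 - orb b n) * (1 - b) := by
      apply div_le_self (by nlinarith) (by nlinarith)
    calc (1 - orb b n) * (1 - b) / (1 + orb b n * b) ≤ (1 - orb b n) * (1 - b) := h2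
      _ ≤ (1 - b) ^ n * (1 - b) := by nlinarith

lemma orb_union (hb0 : 0 < b) (hb1 : b < 1) :
    (⋃ n, Ico (orb b n) (orb b (n + 1))) = Ico (0:ℝ) 1 := by
  apply Subset.antisymm
  · intro x hx
    obtain ⟨n, hn⟩ := mem_iUnion.1 hx
    rw [mem_Ico] at hn ⊢
    exact ⟨le_trans (orb_mem hb0 hb1 n).1 hn.1, lt_trans hn.2 (orb_mem hb0 hb1 (n + 1)).2⟩
  · intro x hx
    rw [mem_Ico] at hx
    have hex : ∃ n, x < orb b n := by
      obtain ⟨n, hn⟩ := exists_pow_lt_of_lt_one (by linarith : (0:ℝ) < 1 - x) (by linarith : 1 - b < 1)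
      exact ⟨n, by linarith [one_sub_orb_le hb0 hb1 n]⟩
    classical
    let N := Nat.find hex
    have hN : x < orb b N := Nat.find_spec hex
    have hN0 : N ≠ 0 := by
      intro h
      rw [h] at hN
      simp only [orb] at hN
      linarith
    obtain ⟨m, hm⟩ := Nat.exists_eq_succ_of_ne_zero hN0
    have hmlt : ¬ x < orb b m := Nat.find_min hex (by omega)
    rw [mem_iUnion]
    exact ⟨m, mem_Ico.2 ⟨not_lt.1 hmlt, by rw [show m + 1 = N from hm.symm]; exact hN⟩⟩

lemma orb_pairwise_disjoint (hb0 : 0 < b) (hb1 : b < 1) :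
    Pairwise (Function.onFun Disjoint fun n => Ico (orb b n) (orb b (n + 1))) := by
  intro m n hmn
  rcases lt_or_gt_of_ne hmn with h | h
  · exact Set.Ico_disjoint_Ico.2
      (min_le_of_left_le ((orb_mono hb0 hb1 h).trans (le_max_right _ _)))
  · exact Set.Ico_disjoint_Ico.2
      (min_le_of_right_le ((orb_mono hb0 hb1 h).trans (le_max_left _ _)))
end Orbit

section Interval

variable {f : ℂ → ℂ}

lemma interval_bounds (hd : DifferentiableOn ℂ f (ball (0:ℂ) 1))
    (hm : MapsTo f (ball (0:ℂ) 1) (ball (0:ℂ) 1)) {a a' bb : ℝ}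
    (ha0 : 0 ≤ a) (ha1 : a < 1) (hb0 : 0 < bb) (hb1 : bb < 1)
    (ha' : a' = (a + bb) / (1 + a * bb)) :
    ENNReal.ofReal (2 * bb / (1 + bb) ^ 2) * ENNReal.ofReal (1 - Dh f (a:ℂ))
        ≤ ∫⁻ r in Ico a a', ENNReal.ofReal ((1 - Dh f (r:ℂ)) * (2 / (1 - r ^ 2)))
    ∧ (∫⁻ r in Ico a a', ENNReal.ofReal ((1 - Dh f (r:ℂ)) * (2 / (1 - r ^ 2))))
        ≤ ENNReal.ofReal (2 * bb / (1 - bb) ^ 2) * ENNReal.ofReal (1 - Dh f (a:ℂ)) := by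
  obtain ⟨haa', ha'1, hpos⟩ := orbit_step_facts ha0 ha1 hb0 hb1 ha'
  set K := 1 - Dh f (a:ℂ) with hKdef
  have hK0 : 0 ≤ K := by
    have := Dh_le_one hd hm (real_mem_ball ha0 ha1)
    linarith
  have hmemx : ∀ x ∈ Ico a a', 0 ≤ x ∧ a ≤ x ∧ x < 1 := by
    intro x hx
    rw [mem_Ico] at hx
    exact ⟨le_trans ha0 hx.1, hx.1, lt_trans hx.2 ha'1⟩
  -- lower bound
  constructor
  · have hcont : ContinuousOn
        (fun x : ℝ => 2 * (1 + a) ^ 2 * (1 - x) / ((1 - a) ^ 2 * (1 + x) ^ 3) * K)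
        (Icc a a') := by
      apply ContinuousOn.mul _ continuousOn_const
      apply ContinuousOn.div
      · fun_prop
      · fun_prop
      · intro x hx
        rw [mem_Icc] at hx
        have hx0 : 0 ≤ x := le_trans ha0 hx.1
        have : (0:ℝ) < (1 - a) ^ 2 * (1 + x) ^ 3 :=
          mul_pos (pow_pos (by linarith) 2) (pow_pos (by linarith) 3)
        exact ne_of_gt this
    have hint : IntegrableOn
        (fun x : ℝ => 2 * (1 + a) ^ 2 * (1 - x) / ((1 - a) ^ 2 * (1 + x) ^ 3) * K)
        (Ico a a') volume :=
      (hcont.integrableOn_Icc).mono_set Ico_subset_Icc_self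
    have hnn : 0 ≤ᵐ[volume.restrict (Ico a a')]
        fun x : ℝ => 2 * (1 + a) ^ 2 * (1 - x) / ((1 - a) ^ 2 * (1 + x) ^ 3) * K := by
      rw [Filter.EventuallyLE, ae_restrict_iff' measurableSet_Ico]
      apply ae_of_all
      intro x hx
      obtain ⟨hx0, hax, hx1⟩ := hmemx x hx
      have h1 : (0:ℝ) ≤ 2 * (1 + a) ^ 2 * (1 - x) :=
        mul_nonneg (by positivity) (by linarith)
      have h2 : (0:ℝ) < (1 - a) ^ 2 * (1 + x) ^ 3 :=
        mul_pos (pow_pos (by linarith) 2) (pow_pos (by linarith) 3)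
      have := mul_nonneg (div_nonneg h1 h2.le) hK0
      simpa using this
    have heq : ∫ x in Ico a a', 2 * (1 + a) ^ 2 * (1 - x) / ((1 - a) ^ 2 * (1 + x) ^ 3) * K
        = 2 * bb / (1 + bb) ^ 2 * K := by
      rw [integral_Ico_eq_integral_Ioo, ← integral_Ioc_eq_integral_Ioo,
        ← intervalIntegral.integral_of_le haa'.le]
      rw [intervalIntegral.integral_mul_const, integral_clow ha0 ha1 hb0 hb1 ha']
    calc ENNReal.ofReal (2 * bb / (1 + bb) ^ 2) * ENNReal.ofReal K
        = ENNReal.ofReal (2 * bb / (1 + bb) ^ 2 * K) := by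
          rw [ENNReal.ofReal_mul (div_nonneg (by linarith) (sq_nonneg _))]
      _ = ENNReal.ofReal (∫ x in Ico a a',
            2 * (1 + a) ^ 2 * (1 - x) / ((1 - a) ^ 2 * (1 + x) ^ 3) * K) := by rw [heq]
      _ = ∫⁻ x in Ico a a', ENNReal.ofReal
            (2 * (1 + a) ^ 2 * (1 - x) / ((1 - a) ^ 2 * (1 + x) ^ 3) * K) :=
          ofReal_integral_eq_lintegral_ofReal hint hnn
      _ ≤ ∫⁻ r in Ico a a', ENNReal.ofReal ((1 - Dh f (r:ℂ)) * (2 / (1 - r ^ 2))) := by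
          apply lintegral_mono_ae
          rw [ae_restrict_iff' measurableSet_Ico]
          apply ae_of_all
          intro x hx
          obtain ⟨hx0, hax, hx1⟩ := hmemx x hx
          exact ENNReal.ofReal_le_ofReal (pointwise_low hd hm ha0 hax hx1)
  · have hcont : ContinuousOn
        (fun x : ℝ => 2 * (1 - a) ^ 2 * (1 + x) / ((1 + a) ^ 2 * (1 - x) ^ 3) * K)
        (Icc a a') := by
      apply ContinuousOn.mul _ continuousOn_const
      apply ContinuousOn.div
      · fun_prop
      · fun_prop
      · intro x hx
        rw [mem_Icc] at hx
        have hx1 : x < 1 := lt_of_le_of_lt hx.2 ha'1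
        have : (0:ℝ) < (1 + a) ^ 2 * (1 - x) ^ 3 :=
          mul_pos (pow_pos (by linarith) 2) (pow_pos (by linarith) 3)
        exact ne_of_gt this
    have hint : IntegrableOn
        (fun x : ℝ => 2 * (1 - a) ^ 2 * (1 + x) / ((1 + a) ^ 2 * (1 - x) ^ 3) * K)
        (Ico a a') volume :=
      (hcont.integrableOn_Icc).mono_set Ico_subset_Icc_self
    have hnn : 0 ≤ᵐ[volume.restrict (Ico a a')]
        fun x : ℝ => 2 * (1 - a) ^ 2 * (1 + x) / ((1 + a) ^ 2 * (1 - x) ^ 3) * K := by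
      rw [Filter.EventuallyLE, ae_restrict_iff' measurableSet_Ico]
      apply ae_of_all
      intro x hx
      obtain ⟨hx0, hax, hx1⟩ := hmemx x hx
      have h1 : (0:ℝ) ≤ 2 * (1 - a) ^ 2 * (1 + x) := by positivity
      have h2 : (0:ℝ) < (1 + a) ^ 2 * (1 - x) ^ 3 :=
        mul_pos (pow_pos (by linarith) 2) (pow_pos (by linarith) 3)
      have := mul_nonneg (div_nonneg h1 h2.le) hK0
      simpa using this
    have heq : ∫ x in Ico a a', 2 * (1 - a) ^ 2 * (1 + x) / ((1 + a) ^ 2 * (1 - x) ^ 3) * K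
        = 2 * bb / (1 - bb) ^ 2 * K := by
      rw [integral_Ico_eq_integral_Ioo, ← integral_Ioc_eq_integral_Ioo,
        ← intervalIntegral.integral_of_le haa'.le]
      rw [intervalIntegral.integral_mul_const, integral_chigh ha0 ha1 hb0 hb1 ha']
    calc (∫⁻ r in Ico a a', ENNReal.ofReal ((1 - Dh f (r:ℂ)) * (2 / (1 - r ^ 2))))
        ≤ ∫⁻ x in Ico a a', ENNReal.ofReal
            (2 * (1 - a) ^ 2 * (1 + x) / ((1 + a) ^ 2 * (1 - x) ^ 3) * K) := by
          apply lintegral_mono_ae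
          rw [ae_restrict_iff' measurableSet_Ico]
          apply ae_of_all
          intro x hx
          obtain ⟨hx0, hax, hx1⟩ := hmemx x hx
          exact ENNReal.ofReal_le_ofReal (pointwise_high hd hm ha0 hax hx1)
      _ = ENNReal.ofReal (∫ x in Ico a a',
            2 * (1 - a) ^ 2 * (1 + x) / ((1 + a) ^ 2 * (1 - x) ^ 3) * K) :=
          (ofReal_integral_eq_lintegral_ofReal hint hnn).symm
      _ = ENNReal.ofReal (2 * bb / (1 - bb) ^ 2 * K) := by rw [heq]
      _ = ENNReal.ofReal (2 * bb / (1 - bb) ^ 2) * ENNReal.ofReal K := by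
          rw [ENNReal.ofReal_mul (div_nonneg (by linarith) (sq_nonneg _))]
end Interval


theorem integral_vs_sum_along_orbit (φ : ℂ → ℂ)
    (hφ : DifferentiableOn ℂ φ (ball (0:ℂ) 1))
    (hmap : MapsTo φ (ball (0:ℂ) 1) (ball (0:ℂ) 1))
    (b : ℝ) (hb0 : 0 < b) (hb1 : b < 1)
    (ψ : ℂ → ℂ) (hψ : ∀ z : ℂ, ψ z = (z + (b : ℂ)) / (1 + (b : ℂ) * z)) :
    ENNReal.ofReal (2 * b / (1 + b) ^ 2) *
        (∑' n : ℕ, ENNReal.ofReal (1 - Dh φ (ψ^[n] 0)))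
      ≤ ∫⁻ r in Ioo (0:ℝ) 1,
          ENNReal.ofReal ((1 - Dh φ (r : ℂ)) * (2 / (1 - r ^ 2)))
    ∧ (∫⁻ r in Ioo (0:ℝ) 1,
          ENNReal.ofReal ((1 - Dh φ (r : ℂ)) * (2 / (1 - r ^ 2))))
      ≤ ENNReal.ofReal (2 * b / (1 - b) ^ 2) *
          (∑' n : ℕ, ENNReal.ofReal (1 - Dh φ (ψ^[n] 0))) := by
  have hiter : ∀ n : ℕ, ψ^[n] (0:ℂ) = ((orb b n : ℝ) : ℂ) := by
    intro n
    induction n with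
    | zero => simp [orb]
    | succ n ih =>
      rw [Function.iterate_succ_apply', ih, hψ, orb_succ]
      push_cast
      ring_nf
  have hI : (∫⁻ r in Ioo (0:ℝ) 1, ENNReal.ofReal ((1 - Dh φ (r:ℂ)) * (2 / (1 - r ^ 2))))
      = ∑' n : ℕ, ∫⁻ r in Ico (orb b n) (orb b (n + 1)),
          ENNReal.ofReal ((1 - Dh φ (r:ℂ)) * (2 / (1 - r ^ 2))) := by
    rw [setLIntegral_congr Ioo_ae_eq_Ico]
    rw [← orb_union hb0 hb1,
      lintegral_iUnion (fun n => measurableSet_Ico) (orb_pairwise_disjoint hb0 hb1)]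
  constructor
  · rw [hI]
    simp only [hiter]
    rw [← ENNReal.tsum_mul_left]
    exact ENNReal.tsum_le_tsum fun n => (interval_bounds hφ hmap (orb_mem hb0 hb1 n).1
      (orb_mem hb0 hb1 n).2 hb0 hb1 (orb_succ n)).1
  · rw [hI]
    simp only [hiter]
    rw [← ENNReal.tsum_mul_left]
    exact ENNReal.tsum_le_tsum fun n => (interval_bounds hφ hmap (orb_mem hb0 hb1 n).1
      (orb_mem hb0 hb1 n).2 hb0 hb1 (orb_succ n)).2
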